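/- arXiv:1811.04923 — 2 statements merged into one kernel-verified Lean document; each statement's English description precedes it below -/
import Mathlib

section
/- For every n ≥ 1, the 3×3 matrix whose entries are the n-th base-10 lunar powers of [[44, 38, 45], [46, 0, 28], [18, 47, 8]] is a base-10 lunar magic square with pairwise distinct entries whose total is the n-th lunar power of 48; in particular, for every n there exist 3×3 lunar magic squares of n-th lunar powers. -/
/-- The `d`-th base-`B` digit of `n` (position 0 is the least significant digit). -/
def lunarDigit (B n d : ℕ) : ℕ := n / B ^ d % B

/-- Base-`B` lunar addition: the `d`-th digit of `x ⊕ y` is the maximum of the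
`d`-th digits of `x` and `y` (no carries). -/
def lunarAdd (B x y : ℕ) : ℕ :=
  ∑ d ∈ Finset.range (x + y + 1), max (lunarDigit B x d) (lunarDigit B y d) * B ^ d

/-- Base-`B` lunar multiplication: the `d`-th digit of `x ⊗ y` is the maximum over
`j + k = d` of the minimum of the `j`-th digit of `x` and the `k`-th digit of `y`. -/
def lunarMul (B x y : ℕ) : ℕ :=
  ∑ d ∈ Finset.range (x + y + 1),
    ((Finset.range (d + 1)).sup fun j => min (lunarDigit B x j) (lunarDigit B y (d - j))) * B ^ d

/-- `M` is a 3×3 base-`B` lunar magic square with total `T`: the lunar sums of the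
three rows, the three columns, and the two diagonals all equal `T`. -/
def IsLunarMagic (B : ℕ) (M : Fin 3 → Fin 3 → ℕ) (T : ℕ) : Prop :=
  (∀ i, lunarAdd B (lunarAdd B (M i 0) (M i 1)) (M i 2) = T) ∧
  (∀ j, lunarAdd B (lunarAdd B (M 0 j) (M 1 j)) (M 2 j) = T) ∧
  lunarAdd B (lunarAdd B (M 0 0) (M 1 1)) (M 2 2) = T ∧
  lunarAdd B (lunarAdd B (M 0 2) (M 1 1)) (M 2 0) = T

/-- The nine entries of `M` are pairwise distinct. -/
def DistinctEntries (M : Fin 3 → Fin 3 → ℕ) : Prop :=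
  ∀ i j i' j', M i j = M i' j' → i = i' ∧ j = j'

/-- The `n`-th base-`B` lunar power of `a` (so `lunarPow B a 1 = a`, and
`lunarPow B a 0` is the lunar multiplicative identity `B - 1`). -/
def lunarPow (B a : ℕ) : ℕ → ℕ
  | 0 => B - 1
  | 1 => a
  | n + 2 => lunarMul B a (lunarPow B a (n + 1))

open Finset

section Aux

lemma lunar_mod_mul (B q x : ℕ) (hB : 0 < B) (hq : 0 < q) :
    x % (q * B) = x % q + (x / q % B) * q := by
  have h2 : x % q < q := Nat.mod_lt _ hq
  have h3 : x / q % B < B := Nat.mod_lt _ hB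
  have h1 : x % q + (x / q % B) * q < q * B := by
    have := Nat.mul_le_mul_right q (Nat.le_sub_one_of_lt h3)
    have hqB : (B - 1) * q + q = q * B := by
      cases B with
      | zero => omega
      | succ b => simp [Nat.add_sub_cancel, Nat.mul_succ, Nat.mul_comm]
    omega
  have key : x = (q * B) * (x / q / B) + (x % q + (x / q % B) * q) := by
    have e1 : q * (x / q) + x % q = x := Nat.div_add_mod x q
    have e2 : B * (x / q / B) + x / q % B = x / q := Nat.div_add_mod (x/q) B
    nlinarith [e1, e2]
  conv_lhs => rw [key]
  rw [Nat.mul_add_mod, Nat.mod_eq_of_lt h1]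

lemma mod_pow_sum (B x : ℕ) (hB : 0 < B) (n : ℕ) :
    x % B ^ n = ∑ i ∈ Finset.range n, (x / B ^ i % B) * B ^ i := by
  induction n with
  | zero => simp [Nat.mod_one]
  | succ n ih =>
    rw [Finset.sum_range_succ, ← ih, pow_succ,
      lunar_mod_mul B (B ^ n) x hB (Nat.pow_pos hB)]

lemma digit_ext {B x y : ℕ} (hB : 2 ≤ B) (h : ∀ d, lunarDigit B x d = lunarDigit B y d) :
    x = y := by
  have h2B : ∀ z : ℕ, z < B ^ (max x y) → True := fun _ _ => trivial
  have hx : x < B ^ (max x y) :=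
    lt_of_lt_of_le (Nat.lt_two_pow_self (n := x))
      ((Nat.pow_le_pow_right (by omega) (le_max_left x y)).trans
        (Nat.pow_le_pow_left hB _))
  have hy : y < B ^ (max x y) :=
    lt_of_lt_of_le (Nat.lt_two_pow_self (n := y))
      ((Nat.pow_le_pow_right (by omega) (le_max_right x y)).trans
        (Nat.pow_le_pow_left hB _))
  calc x = x % B ^ (max x y) := (Nat.mod_eq_of_lt hx).symm
    _ = ∑ i ∈ Finset.range (max x y), (x / B ^ i % B) * B ^ i := mod_pow_sum B x (by omega) _
    _ = ∑ i ∈ Finset.range (max x y), (y / B ^ i % B) * B ^ i :=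
        Finset.sum_congr rfl (fun i _ => congrArg (· * B ^ i) (h i))
    _ = y % B ^ (max x y) := (mod_pow_sum B y (by omega) _).symm
    _ = y := Nat.mod_eq_of_lt hy

/-- digit extraction from a digit sum -/
lemma digit_sum (B : ℕ) (hB : 2 ≤ B) (f : ℕ → ℕ) (hf : ∀ i, f i < B) (m d : ℕ) :
    lunarDigit B (∑ i ∈ Finset.range m, f i * B ^ i) d = if d < m then f d else 0 := by
  have hsum : ∀ k, ∑ i ∈ Finset.range k, f i * B ^ i < B ^ k := by
    intro k
    induction k with
    | zero => simp
    | succ k ih =>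
      rw [Finset.sum_range_succ, pow_succ]
      have h1 : f k * B ^ k ≤ (B - 1) * B ^ k :=
        Nat.mul_le_mul_right _ (Nat.le_sub_one_of_lt (hf k))
      have h2 : (B - 1) * B ^ k + B ^ k = B ^ k * B := by
        cases B with
        | zero => omega
        | succ b => simp [Nat.add_sub_cancel, Nat.mul_succ, Nat.mul_comm]
      omega
  unfold lunarDigit
  by_cases hd : d < m
  · have hsplit : ∑ i ∈ Finset.range m, f i * B ^ i
        = (∑ i ∈ Finset.range d, f i * B ^ i) + f d * B ^ d
          + (∑ i ∈ Finset.Ico (d+1) m, f i * B ^ i) := by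
      rw [← Finset.sum_range_succ, Finset.sum_range_add_sum_Ico _ (by omega : d + 1 ≤ m)]
    have hdvd : ∀ i ∈ Finset.Ico (d+1) m, B ^ (d+1) ∣ f i * B ^ i := by
      intro i hi
      simp only [Finset.mem_Ico] at hi
      exact Dvd.dvd.mul_left (pow_dvd_pow B hi.1) _
    obtain ⟨c, hc⟩ := Finset.dvd_sum hdvd
    rw [hsplit, hc]
    have hlo : ∑ i ∈ Finset.range d, f i * B ^ i < B ^ d := hsum d
    rw [pow_succ] at hc ⊢
    rw [show (∑ i ∈ Finset.range d, f i * B ^ i) + f d * B ^ d + B ^ d * B * c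
        = ((∑ i ∈ Finset.range d, f i * B ^ i) + B ^ d * (f d + B * c)) by ring]
    rw [Nat.add_mul_div_left _ _ (Nat.pow_pos (by omega : 0 < B)),
      Nat.div_eq_of_lt hlo, Nat.zero_add, Nat.add_mul_mod_self_left,
      Nat.mod_eq_of_lt (hf d)]
    simp [hd]
  · have : ∑ i ∈ Finset.range m, f i * B ^ i < B ^ d :=
      lt_of_lt_of_le (hsum m) (Nat.pow_le_pow_right (by omega) (by omega))
    rw [Nat.div_eq_of_lt this]
    simp [hd]

lemma digit_lt (B x d : ℕ) (hB : 0 < B) : lunarDigit B x d < B := Nat.mod_lt _ hB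

lemma digit_eq_zero_of_lt_pow {B x d : ℕ} (h : x < B ^ d) : lunarDigit B x d = 0 := by
  unfold lunarDigit
  rw [Nat.div_eq_of_lt h, Nat.zero_mod]

lemma digit_eq_zero {B x d : ℕ} (hB : 2 ≤ B) (h : x < d + 1) : lunarDigit B x d = 0 := by
  apply digit_eq_zero_of_lt_pow
  calc x < d + 1 := h
    _ ≤ 2 ^ d := Nat.succ_le_of_lt (Nat.lt_two_pow_self (n := d))
    _ ≤ B ^ d := Nat.pow_le_pow_left hB d

lemma digit_lunarAdd (B x y : ℕ) (hB : 2 ≤ B) (d : ℕ) :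
    lunarDigit B (lunarAdd B x y) d = max (lunarDigit B x d) (lunarDigit B y d) := by
  unfold lunarAdd
  rw [digit_sum B hB _
    (fun i => max_lt (digit_lt B x i (by omega)) (digit_lt B y i (by omega))) _ d]
  split
  · rfl
  · next h =>
    rw [digit_eq_zero hB (by omega), digit_eq_zero hB (by omega)]
    simp

lemma digit_lunarMul (B x y : ℕ) (hB : 2 ≤ B) (d : ℕ) :
    lunarDigit B (lunarMul B x y) d
      = (Finset.range (d + 1)).sup fun j => min (lunarDigit B x j) (lunarDigit B y (d - j)) := by
  unfold lunarMul
  have hBbot : (⊥ : ℕ) < B := by rw [bot_eq_zero]; omega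
  rw [digit_sum B hB _ (fun i => Finset.sup_lt_iff hBbot |>.mpr
      (fun j _ => lt_of_le_of_lt (min_le_left _ _) (digit_lt B x j (by omega)))) _ d]
  split
  · rfl
  · next h =>
    symm
    apply (Finset.sup_eq_bot_iff _ _).mpr
    intro j hj
    simp only [Finset.mem_range] at hj
    by_cases hjx : x < j
    · simp [digit_eq_zero hB (by omega : x < j + 1)]
    · have : y < (d - j) + 1 := by omega
      simp [digit_eq_zero hB this]

/-- the digit pattern of lunar powers of a two-digit number -/
def P (a n d : ℕ) : ℕ :=
  if d = 0 then a % 10 else if d < n then min (a / 10) (a % 10)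
  else if d = n then a / 10 else 0

lemma digit_pow' (a : ℕ) (ha : a < 100) :
    ∀ n, 1 ≤ n → ∀ d, lunarDigit 10 (lunarPow 10 a n) d = P a n d := by
  have ha0 : lunarDigit 10 a 0 = a % 10 := by unfold lunarDigit; simp
  have ha1 : lunarDigit 10 a 1 = a / 10 := by
    unfold lunarDigit; simp [Nat.mod_eq_of_lt (by omega : a / 10 < 10)]
  have haj : ∀ j, 2 ≤ j → lunarDigit 10 a j = 0 := by
    intro j hj
    apply digit_eq_zero_of_lt_pow
    calc a < 100 := ha
      _ = 10 ^ 2 := by norm_num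
      _ ≤ 10 ^ j := Nat.pow_le_pow_right (by omega) hj
  intro n
  induction n with
  | zero => omega
  | succ n ih =>
    match n, ih with
    | 0, _ =>
      intro _ d
      show lunarDigit 10 a d = P a 1 d
      unfold P
      match d with
      | 0 => simpa using ha0
      | 1 => simpa using ha1
      | (k+2) => simpa using haj (k+2) (by omega)
    | (m+1), ih =>
      intro _ d
      have ih' := ih (by omega)
      show lunarDigit 10 (lunarMul 10 a (lunarPow 10 a (m+1))) d = P a (m+2) d
      rw [digit_lunarMul _ _ _ (by omega)]
      have hterm : ∀ j ∈ Finset.range (d+1),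
          min (lunarDigit 10 a j) (lunarDigit 10 (lunarPow 10 a (m+1)) (d - j))
          = min (lunarDigit 10 a j) (P a (m+1) (d - j)) := by
        intro j _; rw [ih' (d - j)]
      rw [Finset.sup_congr rfl hterm]
      match d with
      | 0 =>
        rw [show Finset.range 1 = {0} from rfl, Finset.sup_singleton]
        simp only [ha0, Nat.sub_zero]
        simp only [P]
        simp
      | (e+1) =>
        have hsplit : Finset.range (e + 2) = {0, 1} ∪ Finset.Ico 2 (e+2) := by
          ext x; simp [Finset.mem_Ico]; omega
        rw [hsplit, Finset.sup_union]
        have hrest : (Finset.Ico 2 (e+2)).sup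
            (fun j => min (lunarDigit 10 a j) (P a (m+1) (e + 1 - j))) = 0 := by
          apply (Finset.sup_eq_bot_iff _ _).mpr
          intro j hj
          simp only [Finset.mem_Ico] at hj
          simp [haj j hj.1]
        rw [hrest]
        rw [Finset.sup_insert, Finset.sup_singleton]
        simp only [ha0, ha1, Nat.sub_zero, Nat.add_sub_cancel]
        show max (max (min (a % 10) (P a (m+1) (e+1))) (min (a / 10) (P a (m+1) e))) 0
          = P a (m+2) (e+1)
        simp only [P]
        split_ifs <;> first | omega | exact absurd rfl (by assumption) | exact (‹False›).elim

lemma digit_pow (a : ℕ) (ha : a < 100) (n : ℕ) (hn : 1 ≤ n) (d : ℕ) :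
    lunarDigit 10 (lunarPow 10 a n) d = P a n d := digit_pow' a ha n hn d

lemma pow_add3 (n : ℕ) (hn : 1 ≤ n) (x y z w : ℕ)
    (hx : x < 100) (hy : y < 100) (hz : z < 100) (hw : w < 100)
    (h : ∀ d, max (max (P x n d) (P y n d)) (P z n d) = P w n d) :
    lunarAdd 10 (lunarAdd 10 (lunarPow 10 x n) (lunarPow 10 y n)) (lunarPow 10 z n)
      = lunarPow 10 w n := by
  apply digit_ext (by omega : (2:ℕ) ≤ 10)
  intro d
  rw [digit_lunarAdd _ _ _ (by omega), digit_lunarAdd _ _ _ (by omega),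
    digit_pow x hx n hn, digit_pow y hy n hn, digit_pow z hz n hn, digit_pow w hw n hn]
  exact h d

lemma pow_inj (n : ℕ) (hn : 1 ≤ n) {a a' : ℕ} (ha : a < 100) (ha' : a' < 100)
    (h : lunarPow 10 a n = lunarPow 10 a' n) : a = a' := by
  have h0 := congrArg (fun t => lunarDigit 10 t 0) h
  have h1 := congrArg (fun t => lunarDigit 10 t n) h
  simp only [digit_pow a ha n hn, digit_pow a' ha' n hn] at h0 h1
  have e0 : ∀ b : ℕ, P b n 0 = b % 10 := by intro b; unfold P; simp
  have e1 : ∀ b : ℕ, P b n n = b / 10 := by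
    intro b; unfold P; split_ifs <;> omega
  rw [e0, e0] at h0
  rw [e1, e1] at h1
  omega

end Aux

theorem stmt_13 (n : ℕ) (hn : 1 ≤ n) :
    IsLunarMagic 10
      (fun i j => lunarPow 10 (![![44, 38, 45], ![46, 0, 28], ![18, 47, 8]] i j) n)
      (lunarPow 10 48 n) ∧
    DistinctEntries
      (fun i j => lunarPow 10 (![![44, 38, 45], ![46, 0, 28], ![18, 47, 8]] i j) n) := by
  constructor
  · refine ⟨fun i => ?_, fun j => ?_, ?_, ?_⟩
    · fin_cases i <;>
        simp <;>
        apply pow_add3 n hn _ _ _ _ (by norm_num) (by norm_num) (by norm_num) (by norm_num) <;>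
        (intro d; unfold P; split_ifs <;> omega)
    · fin_cases j <;>
        simp <;>
        apply pow_add3 n hn _ _ _ _ (by norm_num) (by norm_num) (by norm_num) (by norm_num) <;>
        (intro d; unfold P; split_ifs <;> omega)
    · simp
      apply pow_add3 n hn _ _ _ _ (by norm_num) (by norm_num) (by norm_num) (by norm_num)
      intro d; unfold P; split_ifs <;> omega
    · simp
      apply pow_add3 n hn _ _ _ _ (by norm_num) (by norm_num) (by norm_num) (by norm_num)
      intro d; unfold P; split_ifs <;> omega
  · intro i j i' j' h
    fin_cases i <;> fin_cases j <;> fin_cases i' <;> fin_cases j' <;>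
      simp at h <;>
      first
        | exact ⟨rfl, rfl⟩
        | exact absurd (pow_inj n hn (by norm_num) (by norm_num) h) (by norm_num)
end

section
/- For every n ≥ 1, the 3×3 matrix whose entries are the n-th base-10 lunar powers of [[1447, 1347, 1444], [1446, 0, 1247], [1147, 1445, 1]] is a base-10 lunar magic square with pairwise distinct entries. -/
section core
variable {B : ℕ}

lemma lunarDigit_lt (hB : 2 ≤ B) (n d : ℕ) : lunarDigit B n d < B :=
  Nat.mod_lt _ (by omega)

lemma lunarDigit_eq_zero (hB : 2 ≤ B) {n d : ℕ} (h : n ≤ d) : lunarDigit B n d = 0 := by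
  have h2 : n < B ^ d :=
    lt_of_lt_of_le (Nat.lt_two_pow_self (n := n))
      (le_trans (Nat.pow_le_pow_right (by omega) h) (Nat.pow_le_pow_left hB d))
  simp [lunarDigit, Nat.div_eq_of_lt h2]

lemma sum_lt_pow (hB : 2 ≤ B) (f : ℕ → ℕ) (hf : ∀ d, f d < B) (e : ℕ) :
    ∑ d ∈ Finset.range e, f d * B ^ d < B ^ e := by
  induction e with
  | zero => simp
  | succ e ih =>
    rw [Finset.sum_range_succ, pow_succ]
    have h1 : f e * B ^ e ≤ (B - 1) * B ^ e :=
      Nat.mul_le_mul_right _ (by have := hf e; omega)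
    have h2 : (B - 1) * B ^ e + B ^ e = B ^ e * B := by
      have : (B - 1) + 1 = B := by omega
      calc (B - 1) * B ^ e + B ^ e = ((B - 1) + 1) * B ^ e := by ring
        _ = B ^ e * B := by rw [this]; ring
    linarith

lemma sum_digit (hB : 2 ≤ B) (f : ℕ → ℕ) (hf : ∀ d, f d < B) (N e : ℕ) :
    lunarDigit B (∑ d ∈ Finset.range N, f d * B ^ d) e = if e < N then f e else 0 := by
  by_cases h : e < N
  · rw [if_pos h]
    have hsplit : ∑ d ∈ Finset.range N, f d * B ^ d =
        (∑ d ∈ Finset.range e, f d * B ^ d) + ∑ d ∈ Finset.Ico e N, f d * B ^ d := by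
      rw [Finset.range_eq_Ico, Finset.range_eq_Ico]
      exact (Finset.sum_Ico_consecutive (fun d => f d * B ^ d) (Nat.zero_le e) (le_of_lt h)).symm
    have hIco : ∑ d ∈ Finset.Ico e N, f d * B ^ d =
        B ^ e * ∑ k ∈ Finset.range (N - e), f (e + k) * B ^ k := by
      rw [Finset.sum_Ico_eq_sum_range, Finset.mul_sum]
      exact Finset.sum_congr rfl fun k _ => by rw [pow_add]; ring
    have hNe : N - e = (N - e - 1) + 1 := by omega
    have hpeel : ∑ k ∈ Finset.range (N - e), f (e + k) * B ^ k =
        f e + B * ∑ k ∈ Finset.range (N - e - 1), f (e + (k + 1)) * B ^ k := by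
      rw [hNe, Finset.sum_range_succ', Finset.mul_sum]
      simp only [pow_zero, mul_one, pow_succ]
      rw [add_comm]
      congr 1
      exact Finset.sum_congr rfl fun k _ => by ring
    set A := ∑ d ∈ Finset.range e, f d * B ^ d with hA
    set C := ∑ k ∈ Finset.range (N - e - 1), f (e + (k + 1)) * B ^ k with hC
    have hAlt : A < B ^ e := sum_lt_pow hB f hf e
    rw [hsplit, hIco, hpeel]
    unfold lunarDigit
    rw [mul_comm (B ^ e), Nat.add_mul_div_right _ _ (pow_pos (by omega) e),
      Nat.div_eq_of_lt hAlt, zero_add, mul_comm B C, Nat.add_mul_mod_self_right,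
      Nat.mod_eq_of_lt (hf e)]
  · rw [if_neg h]
    unfold lunarDigit
    have : (∑ d ∈ Finset.range N, f d * B ^ d) < B ^ e :=
      lt_of_lt_of_le (sum_lt_pow hB f hf N) (Nat.pow_le_pow_right (by omega) (by omega))
    rw [Nat.div_eq_of_lt this]
    simp

lemma lunar_ext (hB : 2 ≤ B) {x y : ℕ} (h : ∀ d, lunarDigit B x d = lunarDigit B y d) :
    x = y := by
  have rep : ∀ N n : ℕ, ∑ d ∈ Finset.range N, lunarDigit B n d * B ^ d = n % B ^ N := by
    intro N
    induction N with
    | zero => intro n; simp [Nat.mod_one]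
    | succ N ih =>
      intro n
      rw [Finset.sum_range_succ', pow_succ']
      have hdig : ∀ d, lunarDigit B n (d + 1) = lunarDigit B (n / B) d := by
        intro d
        unfold lunarDigit
        rw [pow_succ', Nat.div_div_eq_div_mul, mul_comm B (B ^ d), ← Nat.div_div_eq_div_mul]
      have : ∑ k ∈ Finset.range N, lunarDigit B n (k + 1) * B ^ (k + 1) =
          B * ∑ k ∈ Finset.range N, lunarDigit B (n / B) k * B ^ k := by
        rw [Finset.mul_sum]
        exact Finset.sum_congr rfl fun k _ => by rw [hdig, pow_succ']; ring
      rw [this, ih, Nat.mod_mul]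
      simp [lunarDigit]
      ring
  have hb : ∀ n : ℕ, n < B ^ n :=
    fun n => lt_of_lt_of_le (Nat.lt_two_pow_self (n := n)) (Nat.pow_le_pow_left hB n)
  set N := max x y with hN
  have hx : x < B ^ N := lt_of_lt_of_le (hb x) (Nat.pow_le_pow_right (by omega) (le_max_left _ _))
  have hy : y < B ^ N := lt_of_lt_of_le (hb y) (Nat.pow_le_pow_right (by omega) (le_max_right _ _))
  calc x = x % B ^ N := (Nat.mod_eq_of_lt hx).symm
    _ = ∑ d ∈ Finset.range N, lunarDigit B x d * B ^ d := (rep N x).symm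
    _ = ∑ d ∈ Finset.range N, lunarDigit B y d * B ^ d := by
        exact Finset.sum_congr rfl fun d _ => by rw [h]
    _ = y % B ^ N := rep N y
    _ = y := Nat.mod_eq_of_lt hy

lemma lunarAdd_digit (hB : 2 ≤ B) (x y d : ℕ) :
    lunarDigit B (lunarAdd B x y) d = max (lunarDigit B x d) (lunarDigit B y d) := by
  unfold lunarAdd
  rw [sum_digit hB _ (fun e => max_lt (lunarDigit_lt hB x e) (lunarDigit_lt hB y e)) _ d]
  split_ifs with h
  · rfl
  · rw [lunarDigit_eq_zero hB (show x ≤ d by omega), lunarDigit_eq_zero hB (show y ≤ d by omega)]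
    simp

lemma lunarMul_digit (hB : 2 ≤ B) (x y d : ℕ) :
    lunarDigit B (lunarMul B x y) d =
      (Finset.range (d + 1)).sup fun j => min (lunarDigit B x j) (lunarDigit B y (d - j)) := by
  unfold lunarMul
  rw [sum_digit hB _ (fun e => by
    rw [Finset.sup_lt_iff (show (⊥:ℕ) < B by simp; omega)]
    exact fun j _ => lt_of_le_of_lt (min_le_left _ _) (lunarDigit_lt hB x j)) _ d]
  split_ifs with h
  · rfl
  · symm
    rw [← Nat.le_zero]
    apply Finset.sup_le
    intro j hj
    rw [Finset.mem_range] at hj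
    by_cases hjx : x ≤ j
    · simp [lunarDigit_eq_zero hB hjx]
    · have : y ≤ d - j := by omega
      simp [lunarDigit_eq_zero hB this]

end core

def pdA (c n d : ℕ) : ℕ :=
  if d = 0 then c else if d ≤ 2 * n then 4 else if d ≤ 3 * n then 1 else 0

def pdB (c n d : ℕ) : ℕ :=
  if d = 0 then 7 else if d ≤ n then 4 else if d ≤ 2 * n then c else if d ≤ 3 * n then 1 else 0

lemma lunarDigit_eq_zero'' {B n d : ℕ} (h : n < B ^ d) : lunarDigit B n d = 0 := by
  simp [lunarDigit, Nat.div_eq_of_lt h]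

lemma ten_pow_big {k m : ℕ} (h : m ≤ k) : (10:ℕ) ^ m ≤ 10 ^ k :=
  Nat.pow_le_pow_right (by norm_num) h

lemma sup_witness {f : ℕ → ℕ} {d v : ℕ} (hj : j ≤ d) (hv : v ≤ f j) :
    v ≤ (Finset.range (d + 1)).sup f :=
  le_trans hv (Finset.le_sup (Finset.mem_range.mpr (by omega)))

lemma digitsA {c : ℕ} (hc4 : 4 ≤ c) (hc7 : c ≤ 7) (d : ℕ) :
    lunarDigit 10 (1440 + c) d = pdA c 1 d := by
  rcases d with _ | _ | _ | _ | k
  · norm_num [lunarDigit, pdA]; omega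
  · norm_num [lunarDigit, pdA]; omega
  · norm_num [lunarDigit, pdA]; omega
  · norm_num [lunarDigit, pdA]; omega
  · rw [lunarDigit_eq_zero'' (lt_of_lt_of_le
      (by simp only [show (10:ℕ)^4 = 10000 from by norm_num]; omega : 1440 + c < 10 ^ 4)
      (ten_pow_big (by omega)))]
    simp only [pdA]
    split_ifs <;> first | omega | simp_all

lemma digitsB {c : ℕ} (hc1 : 1 ≤ c) (hc4 : c ≤ 4) (d : ℕ) :
    lunarDigit 10 (1047 + 100 * c) d = pdB c 1 d := by
  rcases d with _ | _ | _ | _ | k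
  · norm_num [lunarDigit, pdB]; omega
  · norm_num [lunarDigit, pdB]; omega
  · norm_num [lunarDigit, pdB]; omega
  · norm_num [lunarDigit, pdB]; omega
  · rw [lunarDigit_eq_zero'' (lt_of_lt_of_le
      (by simp only [show (10:ℕ)^4 = 10000 from by norm_num]; omega : 1047 + 100 * c < 10 ^ 4)
      (ten_pow_big (by omega)))]
    simp only [pdB]
    split_ifs <;> first | omega | simp_all

lemma powA {c : ℕ} (hc4 : 4 ≤ c) (hc7 : c ≤ 7) :
    ∀ n, 1 ≤ n → ∀ d, lunarDigit 10 (lunarPow 10 (1440 + c) n) d = pdA c n d := by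
  intro n hn
  induction n, hn using Nat.le_induction with
  | base => exact digitsA hc4 hc7
  | succ n hn ih =>
    obtain ⟨m, rfl⟩ : ∃ m, n = m + 1 := ⟨n - 1, by omega⟩
    intro d
    rw [show lunarPow 10 (1440 + c) (m + 1 + 1) =
        lunarMul 10 (1440 + c) (lunarPow 10 (1440 + c) (m + 1)) from rfl,
      lunarMul_digit (by norm_num)]
    have hcong : ∀ j ∈ Finset.range (d + 1),
        min (lunarDigit 10 (1440 + c) j) (lunarDigit 10 (lunarPow 10 (1440 + c) (m + 1)) (d - j))
        = min (pdA c 1 j) (pdA c (m + 1) (d - j)) := by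
      intro j _; rw [digitsA hc4 hc7, ih]
    rw [Finset.sup_congr rfl hcong]
    apply le_antisymm
    · apply Finset.sup_le
      intro j hj
      rw [Finset.mem_range] at hj
      simp only [pdA]
      split_ifs <;> first | omega | simp_all
    · rcases (show d = 0 ∨ (1 ≤ d ∧ d ≤ 2 * (m + 1)) ∨ (2 * (m + 1) < d ∧ d ≤ 2 * (m + 2)) ∨
          (2 * (m + 2) < d ∧ d ≤ 3 * (m + 2)) ∨ 3 * (m + 2) < d from by omega) with h | h | h | h | h
      · exact sup_witness (by omega) (j := 0) (by simp only [pdA]; split_ifs <;> first | omega | simp_all)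
      · exact sup_witness (by omega) (j := 0) (by simp only [pdA]; split_ifs <;> first | omega | simp_all)
      · exact sup_witness (by omega) (j := 2) (by simp only [pdA]; split_ifs <;> first | omega | simp_all)
      · exact sup_witness (by omega) (j := 3) (by simp only [pdA]; split_ifs <;> first | omega | simp_all)
      · refine le_trans (le_of_eq ?_) (Nat.zero_le _)
        simp only [pdA]; split_ifs <;> first | omega | simp_all

set_option maxHeartbeats 1000000 in
lemma powB {c : ℕ} (hc1 : 1 ≤ c) (hc4 : c ≤ 4) :
    ∀ n, 1 ≤ n → ∀ d, lunarDigit 10 (lunarPow 10 (1047 + 100 * c) n) d = pdB c n d := by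
  intro n hn
  induction n, hn using Nat.le_induction with
  | base => exact digitsB hc1 hc4
  | succ n hn ih =>
    obtain ⟨m, rfl⟩ : ∃ m, n = m + 1 := ⟨n - 1, by omega⟩
    intro d
    rw [show lunarPow 10 (1047 + 100 * c) (m + 1 + 1) =
        lunarMul 10 (1047 + 100 * c) (lunarPow 10 (1047 + 100 * c) (m + 1)) from rfl,
      lunarMul_digit (by norm_num)]
    have hcong : ∀ j ∈ Finset.range (d + 1),
        min (lunarDigit 10 (1047 + 100 * c) j)
          (lunarDigit 10 (lunarPow 10 (1047 + 100 * c) (m + 1)) (d - j))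
        = min (pdB c 1 j) (pdB c (m + 1) (d - j)) := by
      intro j _; rw [digitsB hc1 hc4, ih]
    rw [Finset.sup_congr rfl hcong]
    apply le_antisymm
    · apply Finset.sup_le
      intro j hj
      rw [Finset.mem_range] at hj
      simp only [pdB]
      split_ifs <;> first | omega | simp_all
    · rcases (show d = 0 ∨ (1 ≤ d ∧ d ≤ m + 1) ∨ d = m + 2 ∨ (m + 2 < d ∧ d ≤ 2 * (m + 2)) ∨
          (2 * (m + 2) < d ∧ d ≤ 3 * (m + 2)) ∨ 3 * (m + 2) < d from by omega)
          with h | h | h | h | h | h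
      · exact sup_witness (by omega) (j := 0) (by simp only [pdB]; split_ifs <;> first | omega | simp_all)
      · exact sup_witness (by omega) (j := 0) (by simp only [pdB]; split_ifs <;> first | omega | simp_all)
      · exact sup_witness (by omega) (j := 1) (by simp only [pdB]; split_ifs <;> first | omega | simp_all)
      · exact sup_witness (by omega) (j := 2) (by simp only [pdB]; split_ifs <;> first | omega | simp_all)
      · exact sup_witness (by omega) (j := 3) (by simp only [pdB]; split_ifs <;> first | omega | simp_all)
      · refine le_trans (le_of_eq ?_) (Nat.zero_le _)
        simp only [pdB]; split_ifs <;> first | omega | simp_all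

lemma mulZero (x : ℕ) : lunarMul 10 0 x = 0 := by
  apply lunar_ext (by norm_num : (2:ℕ) ≤ 10)
  intro d
  have h0 : ∀ j, lunarDigit 10 0 j = 0 := fun j => by simp [lunarDigit]
  rw [lunarMul_digit (by norm_num), h0 d]
  rw [← Nat.le_zero]
  apply Finset.sup_le
  intro j _
  simp [h0]

lemma pow0 : ∀ n, 1 ≤ n → lunarPow 10 0 n = 0 := by
  intro n hn
  induction n, hn using Nat.le_induction with
  | base => rfl
  | succ n hn ih =>
    obtain ⟨m, rfl⟩ : ∃ m, n = m + 1 := ⟨n - 1, by omega⟩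
    rw [show lunarPow 10 0 (m + 1 + 1) = lunarMul 10 0 (lunarPow 10 0 (m + 1)) from rfl, mulZero]

lemma digits1 (d : ℕ) : lunarDigit 10 1 d = if d = 0 then 1 else 0 := by
  rcases d with _ | k
  · rfl
  · rw [lunarDigit_eq_zero'' (lt_of_lt_of_le (by norm_num : (1:ℕ) < 10 ^ 1) (ten_pow_big (by omega)))]
    simp

lemma mulOne : lunarMul 10 1 1 = 1 := by
  apply lunar_ext (by norm_num : (2:ℕ) ≤ 10)
  intro d
  rw [lunarMul_digit (by norm_num), digits1 d]
  apply le_antisymm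
  · apply Finset.sup_le
    intro j hj
    rw [Finset.mem_range] at hj
    rw [digits1, digits1]
    split_ifs <;> first | omega | simp_all
  · split_ifs with hd
    · subst hd
      exact sup_witness (j := 0) (by omega) (by simp [digits1])
    · exact Nat.zero_le _

lemma pow1 : ∀ n, 1 ≤ n → lunarPow 10 1 n = 1 := by
  intro n hn
  induction n, hn using Nat.le_induction with
  | base => rfl
  | succ n hn ih =>
    obtain ⟨m, rfl⟩ : ∃ m, n = m + 1 := ⟨n - 1, by omega⟩
    rw [show lunarPow 10 1 (m + 1 + 1) = lunarMul 10 1 (lunarPow 10 1 (m + 1)) from rfl, ih, mulOne]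


lemma add3_eq {x y z T : ℕ}
    (h : ∀ d, max (max (lunarDigit 10 x d) (lunarDigit 10 y d)) (lunarDigit 10 z d)
      = lunarDigit 10 T d) :
    lunarAdd 10 (lunarAdd 10 x y) z = T := by
  apply lunar_ext (by norm_num : (2:ℕ) ≤ 10)
  intro d
  rw [lunarAdd_digit (by norm_num), lunarAdd_digit (by norm_num), h]

def sigTable : Fin 3 → Fin 3 → ℕ × ℕ :=
  ![![(7,4),(7,3),(4,4)], ![(6,4),(0,0),(7,2)], ![(7,1),(5,4),(1,0)]]

theorem stmt_14 (n : ℕ) (hn : 1 ≤ n) :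
    (∃ T, IsLunarMagic 10
      (fun i j => lunarPow 10 (![![1447, 1347, 1444], ![1446, 0, 1247], ![1147, 1445, 1]] i j) n)
      T) ∧
    DistinctEntries
      (fun i j => lunarPow 10 (![![1447, 1347, 1444], ![1446, 0, 1247], ![1147, 1445, 1]] i j) n) := by
  have hB4 : ∀ d, lunarDigit 10 (lunarPow 10 1447 n) d = pdB 4 n d := by
    have := powB (c := 4) (by norm_num) (by norm_num) n hn; norm_num at this; exact this
  have hB3 : ∀ d, lunarDigit 10 (lunarPow 10 1347 n) d = pdB 3 n d := by
    have := powB (c := 3) (by norm_num) (by norm_num) n hn; norm_num at this; exact this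
  have hB2 : ∀ d, lunarDigit 10 (lunarPow 10 1247 n) d = pdB 2 n d := by
    have := powB (c := 2) (by norm_num) (by norm_num) n hn; norm_num at this; exact this
  have hB1 : ∀ d, lunarDigit 10 (lunarPow 10 1147 n) d = pdB 1 n d := by
    have := powB (c := 1) (by norm_num) (by norm_num) n hn; norm_num at this; exact this
  have hA4 : ∀ d, lunarDigit 10 (lunarPow 10 1444 n) d = pdA 4 n d := by
    have := powA (c := 4) (by norm_num) (by norm_num) n hn; norm_num at this; exact this
  have hA5 : ∀ d, lunarDigit 10 (lunarPow 10 1445 n) d = pdA 5 n d := by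
    have := powA (c := 5) (by norm_num) (by norm_num) n hn; norm_num at this; exact this
  have hA6 : ∀ d, lunarDigit 10 (lunarPow 10 1446 n) d = pdA 6 n d := by
    have := powA (c := 6) (by norm_num) (by norm_num) n hn; norm_num at this; exact this
  have hZ : ∀ d, lunarDigit 10 (lunarPow 10 0 n) d = 0 := by
    rw [pow0 n hn]; intro d; simp [lunarDigit]
  have hO : ∀ d, lunarDigit 10 (lunarPow 10 1 n) d = if d = 0 then 1 else 0 := by
    rw [pow1 n hn]; exact digits1
  constructor
  · refine ⟨lunarPow 10 1447 n, ?_, ?_, ?_, ?_⟩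
    · intro i
      fin_cases i
      · show lunarAdd 10 (lunarAdd 10 (lunarPow 10 1447 n) (lunarPow 10 1347 n))
          (lunarPow 10 1444 n) = lunarPow 10 1447 n
        refine add3_eq fun d => ?_
        rw [hB4, hB3, hA4]
        simp only [pdA, pdB]; split_ifs <;> first | omega | simp_all
      · show lunarAdd 10 (lunarAdd 10 (lunarPow 10 1446 n) (lunarPow 10 0 n))
          (lunarPow 10 1247 n) = lunarPow 10 1447 n
        refine add3_eq fun d => ?_
        rw [hA6, hZ, hB2, hB4]
        simp only [pdA, pdB]; split_ifs <;> first | omega | simp_all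
      · show lunarAdd 10 (lunarAdd 10 (lunarPow 10 1147 n) (lunarPow 10 1445 n))
          (lunarPow 10 1 n) = lunarPow 10 1447 n
        refine add3_eq fun d => ?_
        rw [hB1, hA5, hO, hB4]
        simp only [pdA, pdB]; split_ifs <;> first | omega | simp_all
    · intro j
      fin_cases j
      · show lunarAdd 10 (lunarAdd 10 (lunarPow 10 1447 n) (lunarPow 10 1446 n))
          (lunarPow 10 1147 n) = lunarPow 10 1447 n
        refine add3_eq fun d => ?_
        rw [hB4, hA6, hB1]
        simp only [pdA, pdB]; split_ifs <;> first | omega | simp_all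
      · show lunarAdd 10 (lunarAdd 10 (lunarPow 10 1347 n) (lunarPow 10 0 n))
          (lunarPow 10 1445 n) = lunarPow 10 1447 n
        refine add3_eq fun d => ?_
        rw [hB3, hZ, hA5, hB4]
        simp only [pdA, pdB]; split_ifs <;> first | omega | simp_all
      · show lunarAdd 10 (lunarAdd 10 (lunarPow 10 1444 n) (lunarPow 10 1247 n))
          (lunarPow 10 1 n) = lunarPow 10 1447 n
        refine add3_eq fun d => ?_
        rw [hA4, hB2, hO, hB4]
        simp only [pdA, pdB]; split_ifs <;> first | omega | simp_all
    · show lunarAdd 10 (lunarAdd 10 (lunarPow 10 1447 n) (lunarPow 10 0 n))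
        (lunarPow 10 1 n) = lunarPow 10 1447 n
      refine add3_eq fun d => ?_
      rw [hB4, hZ, hO]
      simp only [pdB]; split_ifs <;> first | omega | simp_all
    · show lunarAdd 10 (lunarAdd 10 (lunarPow 10 1444 n) (lunarPow 10 0 n))
        (lunarPow 10 1147 n) = lunarPow 10 1447 n
      refine add3_eq fun d => ?_
      rw [hA4, hZ, hB1, hB4]
      simp only [pdA, pdB]; split_ifs <;> first | omega | simp_all
  · intro i j i' j' h
    have val : ∀ ia jb : Fin 3,
        (lunarDigit 10 ((fun i j =>
          lunarPow 10 (![![1447, 1347, 1444], ![1446, 0, 1247], ![1147, 1445, 1]] i j) n) ia jb) 0,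
         lunarDigit 10 ((fun i j =>
          lunarPow 10 (![![1447, 1347, 1444], ![1446, 0, 1247], ![1147, 1445, 1]] i j) n) ia jb) (n+1))
        = sigTable ia jb := by
      intro i2 jb
      fin_cases i2 <;> fin_cases jb
      · show (lunarDigit 10 (lunarPow 10 1447 n) 0, lunarDigit 10 (lunarPow 10 1447 n) (n+1)) = (7,4)
        rw [hB4, hB4, Prod.mk.injEq]
        refine ⟨?_, ?_⟩ <;> (simp only [pdB]; split_ifs <;> first | omega | simp_all)
      · show (lunarDigit 10 (lunarPow 10 1347 n) 0, lunarDigit 10 (lunarPow 10 1347 n) (n+1)) = (7,3)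
        rw [hB3, hB3, Prod.mk.injEq]
        refine ⟨?_, ?_⟩ <;> (simp only [pdB]; split_ifs <;> first | omega | simp_all)
      · show (lunarDigit 10 (lunarPow 10 1444 n) 0, lunarDigit 10 (lunarPow 10 1444 n) (n+1)) = (4,4)
        rw [hA4, hA4, Prod.mk.injEq]
        refine ⟨?_, ?_⟩ <;> (simp only [pdA]; split_ifs <;> first | omega | simp_all)
      · show (lunarDigit 10 (lunarPow 10 1446 n) 0, lunarDigit 10 (lunarPow 10 1446 n) (n+1)) = (6,4)
        rw [hA6, hA6, Prod.mk.injEq]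
        refine ⟨?_, ?_⟩ <;> (simp only [pdA]; split_ifs <;> first | omega | simp_all)
      · show (lunarDigit 10 (lunarPow 10 0 n) 0, lunarDigit 10 (lunarPow 10 0 n) (n+1)) = (0,0)
        rw [hZ, hZ]
      · show (lunarDigit 10 (lunarPow 10 1247 n) 0, lunarDigit 10 (lunarPow 10 1247 n) (n+1)) = (7,2)
        rw [hB2, hB2, Prod.mk.injEq]
        refine ⟨?_, ?_⟩ <;> (simp only [pdB]; split_ifs <;> first | omega | simp_all)
      · show (lunarDigit 10 (lunarPow 10 1147 n) 0, lunarDigit 10 (lunarPow 10 1147 n) (n+1)) = (7,1)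
        rw [hB1, hB1, Prod.mk.injEq]
        refine ⟨?_, ?_⟩ <;> (simp only [pdB]; split_ifs <;> first | omega | simp_all)
      · show (lunarDigit 10 (lunarPow 10 1445 n) 0, lunarDigit 10 (lunarPow 10 1445 n) (n+1)) = (5,4)
        rw [hA5, hA5, Prod.mk.injEq]
        refine ⟨?_, ?_⟩ <;> (simp only [pdA]; split_ifs <;> first | omega | simp_all)
      · show (lunarDigit 10 (lunarPow 10 1 n) 0, lunarDigit 10 (lunarPow 10 1 n) (n+1)) = (1,0)
        rw [hO, hO, Prod.mk.injEq]
        refine ⟨?_, ?_⟩ <;> (split_ifs <;> first | omega | simp_all)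
    have sig : sigTable i j = sigTable i' j' := by
      rw [← val i j, ← val i' j', h]
    exact (by decide : ∀ (a b a' b' : Fin 3), sigTable a b = sigTable a' b' → a = a' ∧ b = b')
      i j i' j' sig
end
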